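/- For all i,j ∈ ℤ and all k ≥ 0: m_{i,j−1,k}·m_{i,j+1,k}/(m_{i−1,j,k}·m_{i+1,j,k}) = ∏_{l=−k}^{k} y_{3i+j+3l}; and for k = −1: m_{i,j−1,−1}·m_{i,j+1,−1}/(m_{i−1,j,−1}·m_{i+1,j,−1}) = 1/y_{3i+j}. -/

import Mathlib

open scoped Classical

noncomputable section

/-- The field `K = ℚ(y₁,…,y_{2n})`, realized as the fraction field of the
polynomial ring in `2n` indeterminates indexed by `ZMod (2n)` (which builds in
the `2n`-periodicity of the indices). -/
abbrev KK (n : ℕ) : Type := FractionRing (MvPolynomial (ZMod (2*n)) ℚ)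

/-- The indeterminate `y_j` for `j ∈ ℤ`, with `y_{j+2n} = y_j`. -/
def yy (n : ℕ) (j : ℤ) : KK n :=
  algebraMap (MvPolynomial (ZMod (2*n)) ℚ) (KK n) (MvPolynomial.X (j : ZMod (2*n)))

open Finset

lemma prod_Icc_bot' {M : Type*} [CommMonoid M] (f : ℤ → M) {a b : ℤ} (h : a ≤ b) :
    ∏ x ∈ Icc a b, f x = f a * ∏ x ∈ Icc (a+1) b, f x := by
  have he : Icc a b = insert a (Icc (a+1) b) := by
    ext x; simp only [mem_Icc, mem_insert]; omega
  rw [he, prod_insert (by simp only [mem_Icc]; omega)]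

lemma prod_Icc_top' {M : Type*} [CommMonoid M] (f : ℤ → M) {a b : ℤ} (h : a ≤ b) :
    ∏ x ∈ Icc a b, f x = (∏ x ∈ Icc a (b-1), f x) * f b := by
  have he : Icc a b = insert b (Icc a (b-1)) := by
    ext x; simp only [mem_Icc, mem_insert]; omega
  rw [he, prod_insert (by simp only [mem_Icc]; omega), mul_comm]

lemma prod_Icc_shift' {M : Type*} [CommMonoid M] (f : ℤ → M) (a b c : ℤ) :
    ∏ x ∈ Icc (a+c) (b+c), f x = ∏ x ∈ Icc a b, f (x+c) := by
  rw [← map_add_right_Icc, prod_map]; rfl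

lemma prod_Icc_shift1 {M : Type*} [CommMonoid M] (f : ℤ → M) (a b : ℤ) :
    ∏ x ∈ Icc a b, f x = ∏ x ∈ Icc (a-1) (b-1), f (x+1) := by
  have := prod_Icc_shift' f (a-1) (b-1) 1
  simpa using this

lemma prod_Icc_concat' {M : Type*} [CommMonoid M] (f : ℤ → M) {a b c : ℤ}
    (h1 : a - 1 ≤ b) (h2 : b ≤ c) :
    (∏ x ∈ Icc a b, f x) * ∏ x ∈ Icc (b+1) c, f x = ∏ x ∈ Icc a c, f x := by
  have e3 : Icc a c = Icc a b ∪ Icc (b+1) c := by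
    ext x; simp only [mem_Icc, mem_union]; omega
  rw [e3, prod_union (by rw [Finset.disjoint_left]; intro x hx hx'; simp only [mem_Icc] at hx hx'; omega)]

lemma yy_ne_zero (n : ℕ) (j : ℤ) : yy n j ≠ 0 := by
  intro h
  have hinj : Function.Injective (algebraMap (MvPolynomial (ZMod (2*n)) ℚ) (KK n)) :=
    IsFractionRing.injective _ _
  exact MvPolynomial.X_ne_zero ((j : ZMod (2*n))) (hinj (by rw [map_zero]; exact h))

lemma base_posA (n : ℕ) (s j : ℤ) (hj : 1 ≤ j) :
    ∏ l ∈ Icc 0 j, ∏ mm ∈ Icc 0 l, yy n (s-4*l+6*mm) =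
    yy n s * (∏ l ∈ Icc 0 (j-1), ∏ mm ∈ Icc 0 l, yy n (s-4*l+6*mm-4)) *
      ∏ l ∈ Icc 0 (j-1), yy n (s+2*l+2) := by
  rw [prod_Icc_bot' _ (by omega : (0:ℤ) ≤ j)]
  have h0 : ∏ mm ∈ Icc (0:ℤ) 0, yy n (s-4*0+6*mm) = yy n s := by
    rw [Icc_self, prod_singleton]; norm_num
  rw [h0, (by norm_num : Icc (0+1:ℤ) j = Icc 1 j), prod_Icc_shift1 _ 1 j]
  norm_num
  have hstep : ∀ l ∈ Icc (0:ℤ) (j-1),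
      ∏ mm ∈ Icc (0:ℤ) (l+1), yy n (s-4*(l+1)+6*mm) =
      (∏ mm ∈ Icc (0:ℤ) l, yy n (s-4*l+6*mm-4)) * yy n (s+2*l+2) := by
    intro l hl
    simp only [mem_Icc] at hl
    rw [prod_Icc_top' _ (by omega : (0:ℤ) ≤ l+1)]
    norm_num
    congr 1
    · apply prod_congr rfl; intro x _; congr 1; ring
    · congr 1; ring
  rw [prod_congr rfl hstep, prod_mul_distrib]
  ring

lemma base_posB (n : ℕ) (s j : ℤ) (hj : 1 ≤ j) :
    ∏ l ∈ Icc 0 (j-1), ∏ mm ∈ Icc 0 l, yy n (s-4*l+6*mm+2) =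
    (∏ l ∈ Icc 0 (j-1), yy n (s+2*l+2)) *
      ∏ l ∈ Icc 0 (j-2), ∏ mm ∈ Icc 0 l, yy n (s-4*l+6*mm-2) := by
  have hstep : ∀ l ∈ Icc (0:ℤ) (j-1),
      ∏ mm ∈ Icc (0:ℤ) l, yy n (s-4*l+6*mm+2) =
      (∏ mm ∈ Icc (0:ℤ) (l-1), yy n (s-4*l+6*mm+2)) * yy n (s+2*l+2) := by
    intro l hl
    simp only [mem_Icc] at hl
    rw [prod_Icc_top' _ (by omega : (0:ℤ) ≤ l)]
    congr 1; congr 1; ring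
  rw [prod_congr rfl hstep, prod_mul_distrib]
  rw [mul_comm]
  congr 1
  rw [prod_Icc_bot' _ (by omega : (0:ℤ) ≤ j-1)]
  have h0 : ∏ mm ∈ Icc (0:ℤ) (0-1), yy n (s-4*0+6*mm+2) = 1 := by
    norm_num
  rw [h0, one_mul, (by norm_num : Icc (0+1:ℤ) (j-1) = Icc 1 (j-1)), prod_Icc_shift1 _ 1 (j-1)]
  norm_num
  refine prod_congr (by rw [show j-1-1 = j-2 by ring]) fun l _ => ?_
  apply prod_congr rfl; intro x _; congr 1; ring

lemma base_pos (n : ℕ) (s j : ℤ) (hj : 1 ≤ j) :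
    (∏ l ∈ Icc 0 (j-2), ∏ mm ∈ Icc 0 l, yy n (s-4*l+6*mm-2)) *
    (∏ l ∈ Icc 0 j, ∏ mm ∈ Icc 0 l, yy n (s-4*l+6*mm)) =
    yy n s * ((∏ l ∈ Icc 0 (j-1), ∏ mm ∈ Icc 0 l, yy n (s-4*l+6*mm-4)) *
    (∏ l ∈ Icc 0 (j-1), ∏ mm ∈ Icc 0 l, yy n (s-4*l+6*mm+2))) := by
  rw [base_posA n s j (by omega), base_posB n s j (by omega)]
  ring

lemma base_negC (n : ℕ) (s j : ℤ) (hj : j ≤ -2) :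
    ∏ l ∈ Icc j (-2), ∏ mm ∈ Icc (l+1) (-1), yy n (s-4*l+6*mm-4) =
    (∏ l ∈ Icc j (-2), yy n (s+2*l+2)) *
      ∏ l ∈ Icc (j+1) (-2), ∏ mm ∈ Icc (l+1) (-1), yy n (s-4*l+6*mm) := by
  have hstep : ∀ l ∈ Icc j (-2:ℤ),
      ∏ mm ∈ Icc (l+1) (-1:ℤ), yy n (s-4*l+6*mm-4) =
      yy n (s+2*l+2) * ∏ mm ∈ Icc (l+2) (-1:ℤ), yy n (s-4*l+6*mm-4) := by
    intro l hl
    simp only [mem_Icc] at hl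
    rw [prod_Icc_bot' _ (by omega : l+1 ≤ (-1:ℤ))]
    rw [show l+1+1 = l+2 by ring]
    congr 1; congr 1; ring
  rw [prod_congr rfl hstep, prod_mul_distrib]
  congr 1
  rw [prod_Icc_top' _ (by omega : j ≤ (-2:ℤ))]
  have h2 : ∏ mm ∈ Icc (-2+2:ℤ) (-1:ℤ), yy n (s-4*(-2)+6*mm-4) = 1 := by
    norm_num
  rw [h2, mul_one, prod_Icc_shift1 (fun l => ∏ mm ∈ Icc (l+1) (-1:ℤ), yy n (s-4*l+6*mm)) (j+1) (-2)]
  rw [show j+1-1 = j by ring, show (-2-1 : ℤ) = -3 by norm_num]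
  refine prod_congr rfl fun l _ => ?_
  refine prod_congr (by rw [show l+1+1 = l+2 by ring]) fun x _ => ?_
  congr 1; ring

lemma base_negD (n : ℕ) (s j : ℤ) (hj : j ≤ -1) :
    ∏ l ∈ Icc (j-1) (-2), ∏ mm ∈ Icc (l+1) (-1), yy n (s-4*l+6*mm-2) =
    (∏ mm ∈ Icc j (-1), yy n (s-4*j+6*mm+2)) *
      ∏ l ∈ Icc j (-2), ∏ mm ∈ Icc (l+1) (-1), yy n (s-4*l+6*mm-2) := by
  rw [prod_Icc_bot' _ (by omega : j-1 ≤ (-2:ℤ)), show j-1+1 = j by ring]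
  congr 1
  refine prod_congr rfl fun x _ => ?_
  congr 1; ring

lemma base_negE (n : ℕ) (s j : ℤ) (hj : j ≤ -2) :
    (∏ l ∈ Icc j (-2), ∏ mm ∈ Icc (l+1) (-1), yy n (s-4*l+6*mm-2)) *
      ∏ mm ∈ Icc (j+1) (-1), yy n (s-4*j+6*mm+2) =
    (∏ l ∈ Icc j (-2), ∏ mm ∈ Icc (l+1) (-1), yy n (s-4*l+6*mm+2)) *
      ∏ l ∈ Icc j (-2), yy n (s+2*l+4) := by
  have hstep : ∀ l ∈ Icc j (-2:ℤ),
      ∏ mm ∈ Icc (l+1) (-1:ℤ), yy n (s-4*l+6*mm-2) =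
      yy n (s+2*l+4) * ∏ mm ∈ Icc ((l+1)+1) (-1:ℤ), yy n (s-4*(l+1)+6*mm+2) := by
    intro l hl
    simp only [mem_Icc] at hl
    rw [prod_Icc_bot' _ (by omega : l+1 ≤ (-1:ℤ))]
    congr 1
    · congr 1; ring
    · refine prod_congr rfl fun x _ => ?_; congr 1; ring
  rw [prod_congr rfl hstep, prod_mul_distrib]
  have hsh : ∏ l ∈ Icc j (-2:ℤ), ∏ mm ∈ Icc ((l+1)+1) (-1:ℤ), yy n (s-4*(l+1)+6*mm+2)
      = ∏ l ∈ Icc (j+1) (-1:ℤ), ∏ mm ∈ Icc (l+1) (-1:ℤ), yy n (s-4*l+6*mm+2) := by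
    rw [prod_Icc_shift1 (fun l => ∏ mm ∈ Icc (l+1) (-1:ℤ), yy n (s-4*l+6*mm+2)) (j+1) (-1)]
    rw [show j+1-1 = j by ring, show (-1-1:ℤ) = -2 by norm_num]
  rw [hsh, prod_Icc_top' (fun l => ∏ mm ∈ Icc (l+1) (-1:ℤ), yy n (s-4*l+6*mm+2)) (by omega : j+1 ≤ (-1:ℤ))]
  have h1 : ∏ mm ∈ Icc (-1+1:ℤ) (-1:ℤ), yy n (s-4*(-1)+6*mm+2) = 1 := by norm_num
  rw [h1, mul_one, show (-1-1:ℤ) = -2 by norm_num]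
  rw [prod_Icc_bot' (fun l => ∏ mm ∈ Icc (l+1) (-1:ℤ), yy n (s-4*l+6*mm+2)) (by omega : j ≤ (-2:ℤ))]
  ring

lemma base_negF (n : ℕ) (s j : ℤ) (hj : j ≤ -2) :
    (∏ mm ∈ Icc j (-1), yy n (s-4*j+6*mm+2)) * ∏ l ∈ Icc j (-2), yy n (s+2*l+4) =
    yy n s * (∏ l ∈ Icc j (-2), yy n (s+2*l+2)) *
      ∏ mm ∈ Icc (j+1) (-1), yy n (s-4*j+6*mm+2) := by
  rw [prod_Icc_bot' _ (by omega : j ≤ (-1:ℤ))]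
  have hsh : ∏ l ∈ Icc j (-2:ℤ), yy n (s+2*l+4) = ∏ l ∈ Icc (j+1) (-1:ℤ), yy n (s+2*l+2) := by
    rw [prod_Icc_shift1 (fun l => yy n (s+2*l+2)) (j+1) (-1), show j+1-1 = j by ring,
      show (-1-1:ℤ) = -2 by norm_num]
    refine prod_congr rfl fun x _ => ?_; congr 1; ring
  rw [hsh]
  have hc : yy n (s-4*j+6*j+2) * ∏ l ∈ Icc (j+1) (-1:ℤ), yy n (s+2*l+2)
      = ∏ l ∈ Icc j (-1:ℤ), yy n (s+2*l+2) := by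
    rw [prod_Icc_bot' (fun l => yy n (s+2*l+2)) (by omega : j ≤ (-1:ℤ))]
    congr 2; ring
  have ht : ∏ l ∈ Icc j (-1:ℤ), yy n (s+2*l+2)
      = (∏ l ∈ Icc j (-2:ℤ), yy n (s+2*l+2)) * yy n s := by
    rw [prod_Icc_top' (fun l => yy n (s+2*l+2)) (by omega : j ≤ (-1:ℤ)),
      show (-1-1:ℤ) = -2 by norm_num]
    congr 2; ring
  calc yy n (s-4*j+6*j+2) * (∏ mm ∈ Icc (j+1) (-1:ℤ), yy n (s-4*j+6*mm+2)) *
        ∏ l ∈ Icc (j+1) (-1:ℤ), yy n (s+2*l+2)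
      = (yy n (s-4*j+6*j+2) * ∏ l ∈ Icc (j+1) (-1:ℤ), yy n (s+2*l+2)) *
        ∏ mm ∈ Icc (j+1) (-1:ℤ), yy n (s-4*j+6*mm+2) := by ring
    _ = _ := by rw [hc, ht]; ring

lemma base_neg (n : ℕ) (s j : ℤ) (hj : j ≤ -2) :
    (∏ l ∈ Icc (j-1) (-2), ∏ mm ∈ Icc (l+1) (-1), yy n (s-4*l+6*mm-2)) *
    (∏ l ∈ Icc (j+1) (-2), ∏ mm ∈ Icc (l+1) (-1), yy n (s-4*l+6*mm)) =
    yy n s * ((∏ l ∈ Icc j (-2), ∏ mm ∈ Icc (l+1) (-1), yy n (s-4*l+6*mm-4)) *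
    (∏ l ∈ Icc j (-2), ∏ mm ∈ Icc (l+1) (-1), yy n (s-4*l+6*mm+2))) := by
  have hrj : (∏ mm ∈ Icc (j+1) (-1:ℤ), yy n (s-4*j+6*mm+2)) ≠ 0 :=
    prod_ne_zero_iff.mpr fun x _ => yy_ne_zero n _
  apply mul_right_cancel₀ hrj
  rw [base_negD n s j (by omega), base_negC n s j (by omega)]
  have hE := base_negE n s j (by omega)
  have hF := base_negF n s j (by omega)
  linear_combination
    ((∏ mm ∈ Icc j (-1:ℤ), yy n (s-4*j+6*mm+2)) *
      ∏ l ∈ Icc (j+1) (-2:ℤ), ∏ mm ∈ Icc (l+1) (-1:ℤ), yy n (s-4*l+6*mm)) * hE +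
    ((∏ l ∈ Icc (j+1) (-2:ℤ), ∏ mm ∈ Icc (l+1) (-1:ℤ), yy n (s-4*l+6*mm)) *
      ∏ l ∈ Icc j (-2:ℤ), ∏ mm ∈ Icc (l+1) (-1:ℤ), yy n (s-4*l+6*mm+2)) * hF

lemma prodstep (n : ℕ) (k t : ℤ) (hk : 2 ≤ k) :
    (∏ l ∈ Icc (-(k-1)) (k-1), yy n (t-3+3*l)) * (∏ l ∈ Icc (-(k-1)) (k-1), yy n (t+3+3*l))
    = (∏ l ∈ Icc (-k) k, yy n (t+3*l)) * (∏ l ∈ Icc (-(k-2)) (k-2), yy n (t+3*l)) := by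
  have h1 : ∏ l ∈ Icc (-(k-1)) (k-1), yy n (t-3+3*l) = ∏ l ∈ Icc (-k) (k-2), yy n (t+3*l) := by
    have e := prod_Icc_shift' (fun l => yy n (t-3+3*l)) (-k) (k-2) 1
    rw [show -k+1 = -(k-1) by ring, show k-2+1 = k-1 by ring] at e
    rw [e]
    refine prod_congr rfl fun x _ => ?_; congr 1; ring
  have h2 : ∏ l ∈ Icc (-(k-1)) (k-1), yy n (t+3+3*l) = ∏ l ∈ Icc (-(k-2)) k, yy n (t+3*l) := by
    have e := prod_Icc_shift' (fun l => yy n (t+3*l)) (-(k-1)) (k-1) 1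
    rw [show -(k-1)+1 = -(k-2) by ring, show k-1+1 = k by ring] at e
    rw [e]
    refine prod_congr rfl fun x _ => ?_; congr 1; ring
  rw [h1, h2]
  have s1 : (∏ x ∈ Icc (-k) (-k+1), yy n (t+3*x)) * (∏ x ∈ Icc (-(k-2)) (k-2), yy n (t+3*x))
      = ∏ x ∈ Icc (-k) (k-2), yy n (t+3*x) := by
    have := prod_Icc_concat' (fun l => yy n (t+3*l)) (by omega : -k-1 ≤ -k+1) (by omega : -k+1 ≤ k-2)
    rw [show -k+1+1 = -(k-2) by ring] at this
    exact this
  have s2 : (∏ x ∈ Icc (-(k-2)) (k-2), yy n (t+3*x)) * (∏ x ∈ Icc (k-1) k, yy n (t+3*x))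
      = ∏ x ∈ Icc (-(k-2)) k, yy n (t+3*x) := by
    have := prod_Icc_concat' (fun l => yy n (t+3*l)) (by omega : -(k-2)-1 ≤ k-2) (by omega : k-2 ≤ k)
    rw [show k-2+1 = k-1 by ring] at this
    exact this
  have s3 : (∏ x ∈ Icc (-k) (k-2), yy n (t+3*x)) * (∏ x ∈ Icc (k-1) k, yy n (t+3*x))
      = ∏ x ∈ Icc (-k) k, yy n (t+3*x) := by
    have := prod_Icc_concat' (fun l => yy n (t+3*l)) (by omega : -k-1 ≤ k-2) (by omega : k-2 ≤ k)
    rw [show k-2+1 = k-1 by ring] at this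
    exact this
  rw [← s3, ← s1, ← s2]
  ring

/-- **Lemma 6.2.**  For the Laurent monomials `m_{i,j,k}` of Section 6,
`m_{i,j−1,k} m_{i,j+1,k} / (m_{i−1,j,k} m_{i+1,j,k}) = ∏_{l=−k}^{k} y_{3i+j+3l}`
for all `k ≥ 0`, and
`m_{i,j−1,−1} m_{i,j+1,−1} / (m_{i−1,j,−1} m_{i+1,j,−1}) = y_{3i+j}⁻¹`. -/
theorem stmt9 (n : ℕ) (hn : 2 ≤ n)
    (m : ℤ → ℤ → ℤ → KK n)
    (hm0 : ∀ i : ℤ, m i (-1) 0 = 1 ∧ m i 0 0 = 1)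
    (hm1 : ∀ i j : ℤ, 1 ≤ j → m i j 0 =
      ∏ l ∈ Finset.Icc 0 (j-1), ∏ mm ∈ Finset.Icc 0 l, yy n (3*i+j-4*l+6*mm-1))
    (hm2 : ∀ i j : ℤ, j ≤ -2 → m i j 0 =
      ∏ l ∈ Finset.Icc j (-2), ∏ mm ∈ Finset.Icc (l+1) (-1), yy n (3*i+j-4*l+6*mm-1))
    (hm3 : ∀ i j : ℤ, m i j (-1) = (m i j 0)⁻¹)
    (hm4 : ∀ i j k : ℤ, 1 ≤ k →
      m i j k = m (i-1) j (k-1) * m (i+1) j (k-1) / m i j (k-2)) :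
    (∀ i j k : ℤ, 0 ≤ k →
      m i (j-1) k * m i (j+1) k / (m (i-1) j k * m (i+1) j k) =
        ∏ l ∈ Finset.Icc (-k) k, yy n (3*i+j+3*l)) ∧
    (∀ i j : ℤ,
      m i (j-1) (-1) * m i (j+1) (-1) / (m (i-1) j (-1) * m (i+1) j (-1)) =
        (yy n (3*i+j))⁻¹) := by
  -- extended level-0 formulas
  have hm1' : ∀ i j : ℤ, 0 ≤ j → m i j 0 =
      ∏ l ∈ Icc 0 (j-1), ∏ mm ∈ Icc 0 l, yy n (3*i+j-4*l+6*mm-1) := by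
    intro i j hj
    rcases eq_or_lt_of_le hj with h|h
    · rw [← h, (hm0 i).2]
      rw [show (0:ℤ)-1 = -1 by norm_num, Icc_eq_empty (by norm_num), prod_empty]
    · exact hm1 i j (by omega)
  have hm2' : ∀ i j : ℤ, j ≤ -1 → m i j 0 =
      ∏ l ∈ Icc j (-2), ∏ mm ∈ Icc (l+1) (-1), yy n (3*i+j-4*l+6*mm-1) := by
    intro i j hj
    rcases eq_or_lt_of_le hj with h|h
    · rw [h, (hm0 i).1, Icc_eq_empty (by norm_num), prod_empty]
    · exact hm2 i j (by omega)
  -- the key level-0 identity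
  have base : ∀ i j : ℤ, m i (j-1) 0 * m i (j+1) 0 =
      yy n (3*i+j) * (m (i-1) j 0 * m (i+1) j 0) := by
    intro i j
    rcases le_or_gt 1 j with hj | hj
    · -- j ≥ 1 : positive case
      have c1 : m i (j-1) 0 = ∏ l ∈ Icc 0 (j-2), ∏ mm ∈ Icc 0 l, yy n ((3*i+j)-4*l+6*mm-2) := by
        rw [hm1' i (j-1) (by omega)]
        refine prod_congr (by rw [show j-1-1 = j-2 by ring]) fun l _ => ?_
        refine prod_congr rfl fun x _ => ?_; congr 1; ring
      have c2 : m i (j+1) 0 = ∏ l ∈ Icc 0 j, ∏ mm ∈ Icc 0 l, yy n ((3*i+j)-4*l+6*mm) := by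
        rw [hm1' i (j+1) (by omega)]
        refine prod_congr (by rw [show j+1-1 = j by ring]) fun l _ => ?_
        refine prod_congr rfl fun x _ => ?_; congr 1; ring
      have c3 : m (i-1) j 0 = ∏ l ∈ Icc 0 (j-1), ∏ mm ∈ Icc 0 l, yy n ((3*i+j)-4*l+6*mm-4) := by
        rw [hm1' (i-1) j (by omega)]
        refine prod_congr rfl fun l _ => ?_
        refine prod_congr rfl fun x _ => ?_; congr 1; ring
      have c4 : m (i+1) j 0 = ∏ l ∈ Icc 0 (j-1), ∏ mm ∈ Icc 0 l, yy n ((3*i+j)-4*l+6*mm+2) := by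
        rw [hm1' (i+1) j (by omega)]
        refine prod_congr rfl fun l _ => ?_
        refine prod_congr rfl fun x _ => ?_; congr 1; ring
      rw [c1, c2, c3, c4]
      exact base_pos n (3*i+j) j hj
    rcases le_or_gt j (-2) with hj2 | hj2
    · -- j ≤ -2 : negative case
      have c1 : m i (j-1) 0 = ∏ l ∈ Icc (j-1) (-2), ∏ mm ∈ Icc (l+1) (-1), yy n ((3*i+j)-4*l+6*mm-2) := by
        rw [hm2' i (j-1) (by omega)]
        refine prod_congr rfl fun l _ => ?_
        refine prod_congr rfl fun x _ => ?_; congr 1; ring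
      have c2 : m i (j+1) 0 = ∏ l ∈ Icc (j+1) (-2), ∏ mm ∈ Icc (l+1) (-1), yy n ((3*i+j)-4*l+6*mm) := by
        rw [hm2' i (j+1) (by omega)]
        refine prod_congr rfl fun l _ => ?_
        refine prod_congr rfl fun x _ => ?_; congr 1; ring
      have c3 : m (i-1) j 0 = ∏ l ∈ Icc j (-2), ∏ mm ∈ Icc (l+1) (-1), yy n ((3*i+j)-4*l+6*mm-4) := by
        rw [hm2' (i-1) j (by omega)]
        refine prod_congr rfl fun l _ => ?_
        refine prod_congr rfl fun x _ => ?_; congr 1; ring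
      have c4 : m (i+1) j 0 = ∏ l ∈ Icc j (-2), ∏ mm ∈ Icc (l+1) (-1), yy n ((3*i+j)-4*l+6*mm+2) := by
        rw [hm2' (i+1) j (by omega)]
        refine prod_congr rfl fun l _ => ?_
        refine prod_congr rfl fun x _ => ?_; congr 1; ring
      rw [c1, c2, c3, c4]
      exact base_neg n (3*i+j) j hj2
    -- j = -1 or j = 0
    have hj01 : j = -1 ∨ j = 0 := by omega
    rcases hj01 with rfl | rfl
    · rw [show (-1:ℤ)-1 = -2 by norm_num, show (-1:ℤ)+1 = 0 by norm_num,
        (hm0 i).2, (hm0 (i-1)).1, (hm0 (i+1)).1, hm2 i (-2) (by norm_num)]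
      rw [Icc_self, prod_singleton, show (-2:ℤ)+1 = -1 by norm_num, Icc_self, prod_singleton]
      simp only [mul_one, one_mul]
      congr 1; ring
    · rw [show (0:ℤ)-1 = -1 by norm_num, show (0:ℤ)+1 = 1 by norm_num,
        (hm0 i).1, (hm0 (i-1)).2, (hm0 (i+1)).2, hm1 i 1 le_rfl]
      rw [show (1:ℤ)-1 = 0 by norm_num, Icc_self, prod_singleton, Icc_self, prod_singleton]
      simp only [mul_one, one_mul]
      congr 1; ring
  -- nonvanishing
  have m0ne : ∀ i j : ℤ, m i j 0 ≠ 0 := by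
    intro i j
    rcases le_or_gt j (-1) with h | h
    · rw [hm2' i j h]
      exact prod_ne_zero_iff.mpr fun l _ => prod_ne_zero_iff.mpr fun x _ => yy_ne_zero n _
    · rw [hm1' i j (by omega)]
      exact prod_ne_zero_iff.mpr fun l _ => prod_ne_zero_iff.mpr fun x _ => yy_ne_zero n _
  have mneN : ∀ N : ℕ, ∀ i j : ℤ, m i j ((N : ℤ) - 1) ≠ 0 := by
    intro N
    induction N using Nat.strong_induction_on with
    | _ N ih =>
      match N with
      | 0 =>
        intro i j
        rw [show ((0:ℕ):ℤ)-1 = -1 by norm_num, hm3]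
        exact inv_ne_zero (m0ne i j)
      | 1 =>
        intro i j
        rw [show ((1:ℕ):ℤ)-1 = 0 by norm_num]
        exact m0ne i j
      | (N+2) =>
        intro i j
        rw [show ((N+2:ℕ):ℤ)-1 = (N:ℤ)+1 by push_cast; ring,
          hm4 i j ((N:ℤ)+1) (by omega)]
        have h1 := ih (N+1) (by omega) (i-1) j
        have h2 := ih (N+1) (by omega) (i+1) j
        have h3 := ih N (by omega) i j
        rw [show ((N+1:ℕ):ℤ)-1 = (N:ℤ)+1-1 by push_cast; ring] at h1 h2
        rw [show ((N:ℕ):ℤ)-1 = (N:ℤ)+1-2 by push_cast; ring] at h3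
        exact div_ne_zero (mul_ne_zero h1 h2) h3
  have mne' : ∀ k : ℤ, -1 ≤ k → ∀ i j : ℤ, m i j k ≠ 0 := by
    intro k hk i j
    have : ((k+1).toNat : ℤ) = k + 1 := Int.toNat_of_nonneg (by omega)
    have := mneN (k+1).toNat i j
    rwa [show (((k+1).toNat : ℕ) : ℤ) - 1 = k by omega] at this
  -- the recurrence step
  have step : ∀ k : ℤ, 1 ≤ k → ∀ i j : ℤ, ∀ P1 P2 Q : KK n, Q ≠ 0 →
      m (i-1) (j-1) (k-1) * m (i-1) (j+1) (k-1) = P1 * (m (i-2) j (k-1) * m i j (k-1)) →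
      m (i+1) (j-1) (k-1) * m (i+1) (j+1) (k-1) = P2 * (m i j (k-1) * m (i+2) j (k-1)) →
      m i (j-1) (k-2) * m i (j+1) (k-2) = Q * (m (i-1) j (k-2) * m (i+1) j (k-2)) →
      m i (j-1) k * m i (j+1) k = (P1 * P2 / Q) * (m (i-1) j k * m (i+1) j k) := by
    intro k hk i j P1 P2 Q hQ h1 h2 h3
    have hc1 : m i (j-1) (k-2) ≠ 0 := mne' _ (by omega) _ _
    have hc2 : m i (j+1) (k-2) ≠ 0 := mne' _ (by omega) _ _
    have hc3 : m (i-1) j (k-2) ≠ 0 := mne' _ (by omega) _ _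
    have hc4 : m (i+1) j (k-2) ≠ 0 := mne' _ (by omega) _ _
    rw [hm4 i (j-1) k hk, hm4 i (j+1) k hk, hm4 (i-1) j k hk, hm4 (i+1) j k hk,
      show i-1-1 = i-2 by ring, show i-1+1 = i by ring, show i+1-1 = i by ring,
      show i+1+1 = i+2 by ring]
    rw [div_mul_div_comm, div_mul_div_comm, div_mul_div_comm,
      div_eq_div_iff (mul_ne_zero hc1 hc2) (mul_ne_zero hQ (mul_ne_zero hc3 hc4))]
    linear_combination
      (Q * (m (i-1) j (k-2) * m (i+1) j (k-2)) *
        (m (i+1) (j-1) (k-1) * m (i+1) (j+1) (k-1))) * h1 +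
      (Q * (m (i-1) j (k-2) * m (i+1) j (k-2)) *
        (P1 * (m (i-2) j (k-1) * m i j (k-1)))) * h2 -
      (P1 * P2 * (m (i-2) j (k-1) * m i j (k-1)) *
        (m i j (k-1) * m (i+2) j (k-1))) * h3
  -- main induction (multiplicative form)
  have S : ∀ N : ℕ, ∀ i j : ℤ, m i (j-1) (N:ℤ) * m i (j+1) (N:ℤ) =
      (∏ l ∈ Icc (-(N:ℤ)) (N:ℤ), yy n (3*i+j+3*l)) * (m (i-1) j (N:ℤ) * m (i+1) j (N:ℤ)) := by
    intro N
    induction N using Nat.strong_induction_on with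
    | _ N ih =>
      match N with
      | 0 =>
        intro i j
        rw [show ((0:ℕ):ℤ) = 0 by norm_num, neg_zero, Icc_self, prod_singleton,
          show 3*i+j+3*0 = 3*i+j by ring]
        exact base i j
      | 1 =>
        intro i j
        have hQ : m i (j-1) ((1:ℤ)-2) * m i (j+1) ((1:ℤ)-2) =
            (yy n (3*i+j))⁻¹ * (m (i-1) j ((1:ℤ)-2) * m (i+1) j ((1:ℤ)-2)) := by
          rw [show (1:ℤ)-2 = -1 by norm_num, hm3, hm3, hm3, hm3, ← mul_inv, ← mul_inv,
            base i j, mul_inv]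
        have h1 := base (i-1) j
        have h2 := base (i+1) j
        rw [show i-1-1 = i-2 by ring, show i-1+1 = i by ring,
          show 3*(i-1)+j = 3*i+j-3 by ring] at h1
        rw [show i+1-1 = i by ring, show i+1+1 = i+2 by ring,
          show 3*(i+1)+j = 3*i+j+3 by ring] at h2
        have h1' : m (i-1) (j-1) ((1:ℤ)-1) * m (i-1) (j+1) ((1:ℤ)-1) =
            yy n (3*i+j-3) * (m (i-2) j ((1:ℤ)-1) * m i j ((1:ℤ)-1)) := by
          rw [show (1:ℤ)-1 = 0 by norm_num]; exact h1
        have h2' : m (i+1) (j-1) ((1:ℤ)-1) * m (i+1) (j+1) ((1:ℤ)-1) =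
            yy n (3*i+j+3) * (m i j ((1:ℤ)-1) * m (i+2) j ((1:ℤ)-1)) := by
          rw [show (1:ℤ)-1 = 0 by norm_num]; exact h2
        have hs := step 1 le_rfl i j (yy n (3*i+j-3)) (yy n (3*i+j+3)) ((yy n (3*i+j))⁻¹)
          (inv_ne_zero (yy_ne_zero n _)) h1' h2' hQ
        rw [show ((1:ℕ):ℤ) = 1 by norm_num, hs]
        congr 1
        rw [div_inv_eq_mul]
        rw [prod_Icc_bot' _ (by norm_num : (-1:ℤ) ≤ 1), show (-1:ℤ)+1 = 0 by norm_num,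
          prod_Icc_bot' _ (by norm_num : (0:ℤ) ≤ 1), show (0:ℤ)+1 = 1 by norm_num,
          Icc_self, prod_singleton]
        rw [show 3*i+j+3*(-1) = 3*i+j-3 by ring, show 3*i+j+3*0 = 3*i+j by ring,
          show 3*i+j+3*1 = 3*i+j+3 by ring]
        ring
      | (N+2) =>
        intro i j
        have hcast : ((N+2:ℕ):ℤ) = (N:ℤ)+2 := by push_cast; ring
        have h1 := ih (N+1) (by omega) (i-1) j
        have h2 := ih (N+1) (by omega) (i+1) j
        have h3 := ih N (by omega) i j
        have hcast1 : ((N+1:ℕ):ℤ) = (N:ℤ)+1 := by push_cast; ring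
        rw [hcast1] at h1 h2
        rw [show i-1-1 = i-2 by ring, show i-1+1 = i by ring] at h1
        rw [show i+1-1 = i by ring, show i+1+1 = i+2 by ring] at h2
        have h1' : m (i-1) (j-1) ((N:ℤ)+2-1) * m (i-1) (j+1) ((N:ℤ)+2-1) =
            (∏ l ∈ Icc (-((N:ℤ)+1)) ((N:ℤ)+1), yy n (3*(i-1)+j+3*l)) *
              (m (i-2) j ((N:ℤ)+2-1) * m i j ((N:ℤ)+2-1)) := by
          rw [show (N:ℤ)+2-1 = (N:ℤ)+1 by ring]; exact h1
        have h2' : m (i+1) (j-1) ((N:ℤ)+2-1) * m (i+1) (j+1) ((N:ℤ)+2-1) =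
            (∏ l ∈ Icc (-((N:ℤ)+1)) ((N:ℤ)+1), yy n (3*(i+1)+j+3*l)) *
              (m i j ((N:ℤ)+2-1) * m (i+2) j ((N:ℤ)+2-1)) := by
          rw [show (N:ℤ)+2-1 = (N:ℤ)+1 by ring]; exact h2
        have h3' : m i (j-1) ((N:ℤ)+2-2) * m i (j+1) ((N:ℤ)+2-2) =
            (∏ l ∈ Icc (-(N:ℤ)) (N:ℤ), yy n (3*i+j+3*l)) *
              (m (i-1) j ((N:ℤ)+2-2) * m (i+1) j ((N:ℤ)+2-2)) := by
          rw [show (N:ℤ)+2-2 = (N:ℤ) by ring]; exact h3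
        have hQne : (∏ l ∈ Icc (-(N:ℤ)) (N:ℤ), yy n (3*i+j+3*l)) ≠ 0 :=
          prod_ne_zero_iff.mpr fun x _ => yy_ne_zero n _
        have hs := step ((N:ℤ)+2) (by omega) i j _ _ _ hQne h1' h2' h3'
        rw [hcast, hs]
        congr 1
        rw [div_eq_iff hQne]
        have hp1 : ∏ l ∈ Icc (-((N:ℤ)+1)) ((N:ℤ)+1), yy n (3*(i-1)+j+3*l) =
            ∏ l ∈ Icc (-(((N:ℤ)+2)-1)) (((N:ℤ)+2)-1), yy n ((3*i+j)-3+3*l) := by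
          refine prod_congr (by rw [show ((N:ℤ)+2)-1 = (N:ℤ)+1 by ring]) fun x _ => ?_
          congr 1; ring
        have hp2 : ∏ l ∈ Icc (-((N:ℤ)+1)) ((N:ℤ)+1), yy n (3*(i+1)+j+3*l) =
            ∏ l ∈ Icc (-(((N:ℤ)+2)-1)) (((N:ℤ)+2)-1), yy n ((3*i+j)+3+3*l) := by
          refine prod_congr (by rw [show ((N:ℤ)+2)-1 = (N:ℤ)+1 by ring]) fun x _ => ?_
          congr 1; ring
        have hq : ∏ l ∈ Icc (-(N:ℤ)) (N:ℤ), yy n (3*i+j+3*l) =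
            ∏ l ∈ Icc (-(((N:ℤ)+2)-2)) (((N:ℤ)+2)-2), yy n ((3*i+j)+3*l) :=
          prod_congr (by rw [show ((N:ℤ)+2)-2 = (N:ℤ) by ring]) fun x _ => rfl
        rw [hp1, hp2, hq]
        exact prodstep n ((N:ℤ)+2) (3*i+j) (by omega)
  constructor
  · intro i j k hk
    obtain ⟨N, hN⟩ : ∃ N : ℕ, (N:ℤ) = k := ⟨k.toNat, Int.toNat_of_nonneg hk⟩
    rw [← hN, div_eq_iff (mul_ne_zero (mne' _ (by omega) _ _) (mne' _ (by omega) _ _))]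
    exact S N i j
  · intro i j
    rw [hm3, hm3, hm3, hm3, ← mul_inv, ← mul_inv, base i j, mul_inv,
      div_eq_iff (inv_ne_zero (mul_ne_zero (m0ne (i-1) j) (m0ne (i+1) j)))]
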